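/- Let d ≥ 2, and equip X := ℝ^{d−1} × ℤ with the product of Lebesgue measure and counting measure. Let G : X × X → ℂ be a locally integrable measurable function that can be decomposed as a finite sum G = Σ_{j=1}^K G_j such that for each j either sup_{(ξ,k)∈X} ∫_X |G_j(ξ,k,η,l)|² d(η,l) ≤ C² or sup_{(η,l)∈X} ∫_X |G_j(ξ,k,η,l)|² d(ξ,k) ≤ C², for some constant C. Then for all f, g ∈ L²(X), the function h(ξ,k) := ∫_X G(ξ,k,η,l) f(ξ−η, k−l) g(η,l) d(η,l) belongs to L²(X), the induced map (f,g) ↦ h is a continuous bilinear map L² × L² → L², and ‖h‖_{L²(X)} ≤ K·C·‖f‖_{L²(X)} ‖g‖_{L²(X)}. -/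

import Mathlib

open MeasureTheory ENNReal NNReal

noncomputable section

/-- The frequency domain `X = ℝ^{d−1} × ℤ`. -/
abbrev Freq (d : ℕ) := (Fin (d - 1) → ℝ) × ℤ

/-- The measure on `X = ℝ^{d−1} × ℤ`: Lebesgue measure times counting measure. -/
def freqMeasure (d : ℕ) : Measure (Freq d) :=
  (volume : Measure (Fin (d - 1) → ℝ)).prod (Measure.count : Measure ℤ)

namespace SchurAux

lemma count_map_int {f : ℤ → ℤ} (hf : Function.Bijective f) :
    Measure.map f (Measure.count : Measure ℤ) = Measure.count := by
  ext s hs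
  rw [Measure.map_apply (measurable_of_countable f) hs]
  calc Measure.count (f ⁻¹' s)
      = Measure.count ((Equiv.ofBijective f hf).symm '' s) := by
        rw [Equiv.image_eq_preimage_symm]
        rfl
    _ = Measure.count s :=
        Measure.count_injective_image (Equiv.ofBijective f hf).symm.injective s

instance : SigmaFinite (Measure.count : Measure ℤ) := by
  apply Measure.sigmaFinite_of_countable (S := Set.range (fun n : ℤ => ({n} : Set ℤ)))
  · exact Set.countable_range _
  · rintro s ⟨n, rfl⟩
    simp [Measure.count_singleton]
  · ext x
    simp only [Set.mem_sUnion, Set.mem_range, Set.mem_univ, iff_true]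
    exact ⟨{x}, ⟨x, rfl⟩, rfl⟩

instance : (Measure.count : Measure ℤ).IsAddLeftInvariant :=
  ⟨fun a => count_map_int (Equiv.addLeft a).bijective⟩

instance : (Measure.count : Measure ℤ).IsAddRightInvariant :=
  ⟨fun a => count_map_int (Equiv.addRight a).bijective⟩

instance : (Measure.count : Measure ℤ).IsNegInvariant :=
  ⟨count_map_int neg_involutive.bijective⟩

instance (d : ℕ) : SigmaFinite (freqMeasure d) := by
  unfold freqMeasure; infer_instance

instance (d : ℕ) : (freqMeasure d).IsAddLeftInvariant := by
  unfold freqMeasure; infer_instance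

instance (d : ℕ) : (freqMeasure d).IsAddRightInvariant := by
  unfold freqMeasure; infer_instance

instance (d : ℕ) : (freqMeasure d).IsNegInvariant := by
  constructor
  show Measure.map Neg.neg (freqMeasure d) = freqMeasure d
  have : (Neg.neg : Freq d → Freq d) = Prod.map Neg.neg Neg.neg := rfl
  rw [this]
  unfold freqMeasure
  rw [← Measure.map_prod_map _ _ measurable_neg measurable_neg,
    Measure.map_neg_eq_self, Measure.map_neg_eq_self]


lemma rpow_two' (x : ℝ≥0∞) : x ^ (2:ℝ) = x ^ 2 := by
  rw [← ENNReal.rpow_natCast x 2]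
  norm_num

lemma sq_halves (x : ℝ≥0∞) : (x ^ (1/(2:ℝ))) ^ 2 = x := by
  rw [← ENNReal.rpow_natCast (x ^ (1/(2:ℝ))) 2, ← ENNReal.rpow_mul]
  norm_num

lemma rpow_half_sq {x : ℝ≥0∞} : (x ^ 2) ^ (1/(2:ℝ)) = x := by
  rw [← ENNReal.rpow_natCast x 2, ← ENNReal.rpow_mul]
  norm_num

section Core

variable {α : Type*} [MeasurableSpace α] [AddCommGroup α] [MeasurableSub₂ α]
  [MeasurableAdd α] [MeasurableNeg α]
  (μ : Measure α) [SigmaFinite μ] [μ.IsAddLeftInvariant] [μ.IsAddRightInvariant]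
  [μ.IsNegInvariant]

lemma row_bound (A : α × α → ℝ≥0∞) (hA : Measurable A) (c : ℝ≥0∞)
    (hrow : ∀ p, ∫⁻ q, A (p, q) ^ 2 ∂μ ≤ c)
    (F G : α → ℝ≥0∞) (hF : Measurable F) (hG : Measurable G) :
    ∫⁻ p, (∫⁻ q, A (p, q) * (F (p - q) * G q) ∂μ) ^ 2 ∂μ ≤
      c * ((∫⁻ p, F p ^ 2 ∂μ) * (∫⁻ q, G q ^ 2 ∂μ)) := by
  have hmeasFG : Measurable (fun z : α × α => (F (z.1 - z.2) * G z.2) ^ 2) :=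
    ((hF.comp measurable_sub).mul (hG.comp measurable_snd)).pow_const 2
  have step1 : ∀ p, (∫⁻ q, A (p, q) * (F (p - q) * G q) ∂μ) ^ 2 ≤
      c * ∫⁻ q, (F (p - q) * G q) ^ 2 ∂μ := by
    intro p
    have hA1 : Measurable fun q => A (p, q) := hA.comp measurable_prodMk_left
    have hB1 : Measurable fun q => F (p - q) * G q :=
      ((hF.comp (measurable_const.sub measurable_id)).mul hG)
    calc (∫⁻ q, A (p, q) * (F (p - q) * G q) ∂μ) ^ 2
        ≤ ((∫⁻ q, A (p, q) ^ (2:ℝ) ∂μ) ^ (1/(2:ℝ)) *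
            (∫⁻ q, (F (p - q) * G q) ^ (2:ℝ) ∂μ) ^ (1/(2:ℝ))) ^ 2 := by
          apply pow_le_pow_left₀ zero_le
          exact ENNReal.lintegral_mul_le_Lp_mul_Lq μ Real.HolderConjugate.two_two
            hA1.aemeasurable hB1.aemeasurable
      _ = (∫⁻ q, A (p, q) ^ (2:ℝ) ∂μ) * (∫⁻ q, (F (p - q) * G q) ^ (2:ℝ) ∂μ) := by
          rw [mul_pow, sq_halves, sq_halves]
      _ ≤ c * ∫⁻ q, (F (p - q) * G q) ^ 2 ∂μ := by
          simp_rw [rpow_two']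
          exact mul_le_mul' (hrow p) le_rfl
  calc ∫⁻ p, (∫⁻ q, A (p, q) * (F (p - q) * G q) ∂μ) ^ 2 ∂μ
      ≤ ∫⁻ p, c * ∫⁻ q, (F (p - q) * G q) ^ 2 ∂μ ∂μ := lintegral_mono step1
    _ = c * ∫⁻ p, ∫⁻ q, (F (p - q) * G q) ^ 2 ∂μ ∂μ := by
        rw [lintegral_const_mul c (hmeasFG.lintegral_prod_right')]
    _ = c * ∫⁻ q, ∫⁻ p, (F (p - q) * G q) ^ 2 ∂μ ∂μ := by
        rw [lintegral_lintegral_swap]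
        exact hmeasFG.aemeasurable
    _ = c * ∫⁻ q, (∫⁻ p, F (p - q) ^ 2 ∂μ) * G q ^ 2 ∂μ := by
        congr 1
        refine lintegral_congr fun q => ?_
        simp_rw [mul_pow]
        have hm : Measurable fun p => F (p - q) ^ 2 :=
          (hF.comp (measurable_id.sub measurable_const)).pow_const 2
        rw [lintegral_mul_const _ hm]
    _ = c * ∫⁻ q, (∫⁻ p, F p ^ 2 ∂μ) * G q ^ 2 ∂μ := by
        congr 1
        refine lintegral_congr fun q => ?_
        rw [lintegral_sub_right_eq_self (fun p => F p ^ 2) q]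
    _ = c * ((∫⁻ p, F p ^ 2 ∂μ) * ∫⁻ q, G q ^ 2 ∂μ) := by
        rw [lintegral_const_mul _ (hG.pow_const 2)]

lemma col_bound (A : α × α → ℝ≥0∞) (hA : Measurable A) (c : ℝ≥0∞)
    (hcol : ∀ q, ∫⁻ p, A (p, q) ^ 2 ∂μ ≤ c)
    (F G : α → ℝ≥0∞) (hF : Measurable F) (hG : Measurable G) :
    ∫⁻ p, (∫⁻ q, A (p, q) * (F (p - q) * G q) ∂μ) ^ 2 ∂μ ≤
      c * ((∫⁻ p, F p ^ 2 ∂μ) * (∫⁻ q, G q ^ 2 ∂μ)) := by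
  have hmeasAG : Measurable (fun z : α × α => (A z * G z.2) ^ 2) :=
    (hA.mul (hG.comp measurable_snd)).pow_const 2
  have step1 : ∀ p, (∫⁻ q, A (p, q) * (F (p - q) * G q) ∂μ) ^ 2 ≤
      (∫⁻ q, (A (p, q) * G q) ^ 2 ∂μ) * ∫⁻ x, F x ^ 2 ∂μ := by
    intro p
    have hA1 : Measurable fun q => A (p, q) * G q :=
      (hA.comp measurable_prodMk_left).mul hG
    have hB1 : Measurable fun q => F (p - q) :=
      hF.comp (measurable_const.sub measurable_id)
    have hrearr : ∀ q, A (p, q) * (F (p - q) * G q) = (A (p, q) * G q) * F (p - q) := by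
      intro q; ring
    have hFtrans : ∫⁻ q, F (p - q) ^ 2 ∂μ = ∫⁻ x, F x ^ 2 ∂μ :=
      (Measure.measurePreserving_sub_left μ p).lintegral_comp (hF.pow_const 2)
    calc (∫⁻ q, A (p, q) * (F (p - q) * G q) ∂μ) ^ 2
        = (∫⁻ q, (A (p, q) * G q) * F (p - q) ∂μ) ^ 2 := by simp_rw [hrearr]
      _ ≤ ((∫⁻ q, (A (p, q) * G q) ^ (2:ℝ) ∂μ) ^ (1/(2:ℝ)) *
            (∫⁻ q, F (p - q) ^ (2:ℝ) ∂μ) ^ (1/(2:ℝ))) ^ 2 := by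
          apply pow_le_pow_left₀ zero_le
          exact ENNReal.lintegral_mul_le_Lp_mul_Lq μ Real.HolderConjugate.two_two
            hA1.aemeasurable hB1.aemeasurable
      _ = (∫⁻ q, (A (p, q) * G q) ^ (2:ℝ) ∂μ) * (∫⁻ q, F (p - q) ^ (2:ℝ) ∂μ) := by
          rw [mul_pow, sq_halves, sq_halves]
      _ = (∫⁻ q, (A (p, q) * G q) ^ 2 ∂μ) * ∫⁻ x, F x ^ 2 ∂μ := by
          simp_rw [rpow_two']
          rw [hFtrans]
  calc ∫⁻ p, (∫⁻ q, A (p, q) * (F (p - q) * G q) ∂μ) ^ 2 ∂μ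
      ≤ ∫⁻ p, (∫⁻ q, (A (p, q) * G q) ^ 2 ∂μ) * ∫⁻ x, F x ^ 2 ∂μ ∂μ := lintegral_mono step1
    _ = (∫⁻ p, ∫⁻ q, (A (p, q) * G q) ^ 2 ∂μ ∂μ) * ∫⁻ x, F x ^ 2 ∂μ := by
        rw [lintegral_mul_const _ (hmeasAG.lintegral_prod_right')]
    _ = (∫⁻ q, ∫⁻ p, (A (p, q) * G q) ^ 2 ∂μ ∂μ) * ∫⁻ x, F x ^ 2 ∂μ := by
        rw [lintegral_lintegral_swap]
        exact hmeasAG.aemeasurable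
    _ ≤ (∫⁻ q, c * G q ^ 2 ∂μ) * ∫⁻ x, F x ^ 2 ∂μ := by
        gcongr with q
        calc ∫⁻ p, (A (p, q) * G q) ^ 2 ∂μ = ∫⁻ p, A (p, q) ^ 2 * G q ^ 2 ∂μ := by
              simp_rw [mul_pow]
          _ = (∫⁻ p, A (p, q) ^ 2 ∂μ) * G q ^ 2 := by
              have hm : Measurable fun p => A (p, q) ^ 2 :=
                (hA.comp (measurable_id.prodMk measurable_const)).pow_const 2
              rw [lintegral_mul_const _ hm]
          _ ≤ c * G q ^ 2 := mul_le_mul' (hcol q) le_rfl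
    _ = c * ((∫⁻ p, F p ^ 2 ∂μ) * ∫⁻ q, G q ^ 2 ∂μ) := by
        rw [lintegral_const_mul _ (hG.pow_const 2)]
        ring

lemma minkowski_sum {K : ℕ} (s : Finset (Fin K)) (Φ : Fin K → α → ℝ≥0∞)
    (hΦ : ∀ j, Measurable (Φ j)) :
    (∫⁻ p, (∑ j ∈ s, Φ j p) ^ (2:ℝ) ∂μ) ^ (1/(2:ℝ)) ≤
      ∑ j ∈ s, (∫⁻ p, Φ j p ^ (2:ℝ) ∂μ) ^ (1/(2:ℝ)) := by
  classical
  induction s using Finset.induction with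
  | empty => simp [ENNReal.zero_rpow_of_pos]
  | insert a s hnotmem ih =>
    rw [Finset.sum_insert hnotmem]
    calc (∫⁻ p, (∑ j ∈ insert a s, Φ j p) ^ (2:ℝ) ∂μ) ^ (1/(2:ℝ))
        = (∫⁻ p, ((Φ a + fun p => ∑ j ∈ s, Φ j p) p) ^ (2:ℝ) ∂μ) ^ (1/(2:ℝ)) := by
          congr 1
          refine lintegral_congr fun p => ?_
          rw [Finset.sum_insert hnotmem]
          rfl
      _ ≤ (∫⁻ p, Φ a p ^ (2:ℝ) ∂μ) ^ (1/(2:ℝ)) +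
            (∫⁻ p, (∑ j ∈ s, Φ j p) ^ (2:ℝ) ∂μ) ^ (1/(2:ℝ)) :=
          ENNReal.lintegral_Lp_add_le (hΦ a).aemeasurable
            (Finset.measurable_sum s fun j _ => hΦ j).aemeasurable one_le_two
      _ ≤ (∫⁻ p, Φ a p ^ (2:ℝ) ∂μ) ^ (1/(2:ℝ)) +
            ∑ j ∈ s, (∫⁻ p, Φ j p ^ (2:ℝ) ∂μ) ^ (1/(2:ℝ)) := add_le_add le_rfl ih

end Core


lemma core (d : ℕ) (K : ℕ) (C : ℝ) (hC : 0 ≤ C)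
    (G : Freq d × Freq d → ℂ) (Gj : Fin K → Freq d × Freq d → ℂ)
    (hGjmeas : ∀ j, Measurable (Gj j))
    (hdecomp : ∀ z, G z = ∑ j, Gj j z)
    (hschur : ∀ j : Fin K,
      (∀ p : Freq d, ∫⁻ q, (‖Gj j (p, q)‖₊ : ℝ≥0∞) ^ 2 ∂(freqMeasure d) ≤
          ENNReal.ofReal (C ^ 2)) ∨
      (∀ q : Freq d, ∫⁻ p, (‖Gj j (p, q)‖₊ : ℝ≥0∞) ^ 2 ∂(freqMeasure d) ≤
          ENNReal.ofReal (C ^ 2)))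
    (f g : Freq d → ℂ) (hfm : Measurable f) (hgm : Measurable g) :
    eLpNorm (fun p => ∫ q, G (p, q) * f (p - q) * g q ∂(freqMeasure d)) 2 (freqMeasure d) ≤
      (K : ℝ≥0∞) * ENNReal.ofReal C * eLpNorm f 2 (freqMeasure d) *
        eLpNorm g 2 (freqMeasure d) := by
  classical
  set μ := freqMeasure d with hμdef
  set F : Freq d → ℝ≥0∞ := fun p => (‖f p‖₊ : ℝ≥0∞) with hFdef
  set Gg : Freq d → ℝ≥0∞ := fun q => (‖g q‖₊ : ℝ≥0∞) with hGgdef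
  set A : Fin K → Freq d × Freq d → ℝ≥0∞ := fun j z => (‖Gj j z‖₊ : ℝ≥0∞) with hAdef
  have hFmeas : Measurable F := hfm.nnnorm.coe_nnreal_ennreal
  have hGgmeas : Measurable Gg := hgm.nnnorm.coe_nnreal_ennreal
  have hAmeas : ∀ j, Measurable (A j) := fun j => (hGjmeas j).nnnorm.coe_nnreal_ennreal
  set Φ : Fin K → Freq d → ℝ≥0∞ :=
    fun j p => ∫⁻ q, A j (p, q) * (F (p - q) * Gg q) ∂μ with hΦdef
  have hΦmeas : ∀ j, Measurable (Φ j) := by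
    intro j
    have : Measurable (fun z : Freq d × Freq d => A j z * (F (z.1 - z.2) * Gg z.2)) :=
      (hAmeas j).mul ((hFmeas.comp measurable_sub).mul (hGgmeas.comp measurable_snd))
    exact this.lintegral_prod_right'
  set If : ℝ≥0∞ := ∫⁻ p, F p ^ 2 ∂μ with hIfdef
  set Ig : ℝ≥0∞ := ∫⁻ q, Gg q ^ 2 ∂μ with hIgdef
  have hΦb : ∀ j, ∫⁻ p, Φ j p ^ 2 ∂μ ≤ ENNReal.ofReal (C ^ 2) * (If * Ig) := by
    intro j
    rcases hschur j with h | h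
    · exact row_bound μ (A j) (hAmeas j) _ h F Gg hFmeas hGgmeas
    · exact col_bound μ (A j) (hAmeas j) _ h F Gg hFmeas hGgmeas
  have hnorm : ∀ p, (‖∫ q, G (p, q) * f (p - q) * g q ∂μ‖₊ : ℝ≥0∞) ≤ ∑ j, Φ j p := by
    intro p
    refine le_trans (enorm_integral_le_lintegral_enorm _) ?_
    have hpt : ∀ q, (‖G (p, q) * f (p - q) * g q‖₊ : ℝ≥0∞) ≤
        ∑ j, A j (p, q) * (F (p - q) * Gg q) := by
      intro q
      have h1 : (‖G (p, q) * f (p - q) * g q‖₊ : ℝ≥0∞) =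
          (‖G (p, q)‖₊ : ℝ≥0∞) * (F (p - q) * Gg q) := by
        simp [hFdef, hGgdef, nnnorm_mul, ENNReal.coe_mul, mul_assoc]
      have h2 : (‖G (p, q)‖₊ : ℝ≥0∞) ≤ ∑ j, A j (p, q) := by
        rw [hdecomp (p, q)]
        calc (‖∑ j, Gj j (p, q)‖₊ : ℝ≥0∞)
            ≤ ((∑ j, ‖Gj j (p, q)‖₊ : ℝ≥0) : ℝ≥0∞) :=
              ENNReal.coe_le_coe.2 (nnnorm_sum_le _ _)
          _ = ∑ j, A j (p, q) := by push_cast; rfl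
      calc (‖G (p, q) * f (p - q) * g q‖₊ : ℝ≥0∞)
          = (‖G (p, q)‖₊ : ℝ≥0∞) * (F (p - q) * Gg q) := h1
        _ ≤ (∑ j, A j (p, q)) * (F (p - q) * Gg q) := mul_le_mul' h2 le_rfl
        _ = ∑ j, A j (p, q) * (F (p - q) * Gg q) := Finset.sum_mul _ _ _
    refine le_trans (lintegral_mono hpt) (le_of_eq ?_)
    exact lintegral_finset_sum _ fun j _ =>
      (hAmeas j).comp measurable_prodMk_left |>.mul
        ((hFmeas.comp (measurable_const.sub measurable_id)).mul hGgmeas)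
  have hsn : eLpNorm (fun p => ∫ q, G (p, q) * f (p - q) * g q ∂μ) 2 μ =
      (∫⁻ p, (‖∫ q, G (p, q) * f (p - q) * g q ∂μ‖₊ : ℝ≥0∞) ^ (2:ℝ) ∂μ) ^ (1/(2:ℝ)) := by
    rw [eLpNorm_eq_lintegral_rpow_enorm_toReal two_ne_zero ENNReal.ofNat_ne_top]
    norm_num [enorm_eq_nnnorm]
  have hsnf : eLpNorm f 2 μ = If ^ (1/(2:ℝ)) := by
    rw [eLpNorm_eq_lintegral_rpow_enorm_toReal two_ne_zero ENNReal.ofNat_ne_top, hIfdef]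
    norm_num [rpow_two', enorm_eq_nnnorm]
    rfl
  have hsng : eLpNorm g 2 μ = Ig ^ (1/(2:ℝ)) := by
    rw [eLpNorm_eq_lintegral_rpow_enorm_toReal two_ne_zero ENNReal.ofNat_ne_top, hIgdef]
    norm_num [rpow_two', enorm_eq_nnnorm]
    rfl
  rw [hsn, hsnf, hsng]
  calc (∫⁻ p, (‖∫ q, G (p, q) * f (p - q) * g q ∂μ‖₊ : ℝ≥0∞) ^ (2:ℝ) ∂μ) ^ (1/(2:ℝ))
      ≤ (∫⁻ p, (∑ j, Φ j p) ^ (2:ℝ) ∂μ) ^ (1/(2:ℝ)) := by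
        apply ENNReal.rpow_le_rpow _ (by norm_num)
        exact lintegral_mono fun p => ENNReal.rpow_le_rpow (hnorm p) (by norm_num)
    _ ≤ ∑ j, (∫⁻ p, Φ j p ^ (2:ℝ) ∂μ) ^ (1/(2:ℝ)) := minkowski_sum μ Finset.univ Φ hΦmeas
    _ ≤ ∑ j : Fin K, (ENNReal.ofReal (C ^ 2) * (If * Ig)) ^ (1/(2:ℝ)) := by
        refine Finset.sum_le_sum fun j _ => ENNReal.rpow_le_rpow ?_ (by norm_num)
        simpa [rpow_two'] using hΦb j
    _ = (K : ℝ≥0∞) * ENNReal.ofReal C * If ^ (1/(2:ℝ)) * Ig ^ (1/(2:ℝ)) := by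
        rw [Finset.sum_const, Finset.card_univ, Fintype.card_fin, nsmul_eq_mul]
        rw [ENNReal.mul_rpow_of_nonneg _ _ (by norm_num : (0:ℝ) ≤ 1/2),
          ENNReal.mul_rpow_of_nonneg _ _ (by norm_num : (0:ℝ) ≤ 1/2)]
        rw [ENNReal.ofReal_pow hC, rpow_half_sq]
        ring

end SchurAux


open SchurAux in
/-- **Schur-type bilinear `L²` boundedness lemma.**  If `G = Σ_{j<K} G_j` where each `G_j`
has square-integral in one of its two variables bounded by `C²` uniformly in the other,
then `h(ξ,k) = ∫ G(ξ,k,η,l) f(ξ−η,k−l) g(η,l) d(η,l)` defines a continuous bilinear map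
`L² × L² → L²` with `‖h‖ ≤ K C ‖f‖_{L²} ‖g‖_{L²}`. -/
theorem schur_bilinear_L2 (d : ℕ) (hd : 2 ≤ d) (K : ℕ) (C : ℝ) (hC : 0 ≤ C)
    (G : Freq d × Freq d → ℂ) (Gj : Fin K → Freq d × Freq d → ℂ)
    (hGmeas : Measurable G) (hGjmeas : ∀ j, Measurable (Gj j))
    (hdecomp : ∀ z, G z = ∑ j, Gj j z)
    (hschur : ∀ j : Fin K,
      (∀ p : Freq d, ∫⁻ q, (‖Gj j (p, q)‖₊ : ℝ≥0∞) ^ 2 ∂(freqMeasure d) ≤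
          ENNReal.ofReal (C ^ 2)) ∨
      (∀ q : Freq d, ∫⁻ p, (‖Gj j (p, q)‖₊ : ℝ≥0∞) ^ 2 ∂(freqMeasure d) ≤
          ENNReal.ofReal (C ^ 2)))
    (f g : Freq d → ℂ)
    (hf : MemLp f 2 (freqMeasure d)) (hg : MemLp g 2 (freqMeasure d)) :
    MemLp (fun p => ∫ q, G (p, q) * f (p - q) * g q ∂(freqMeasure d)) 2 (freqMeasure d) ∧
    eLpNorm (fun p => ∫ q, G (p, q) * f (p - q) * g q ∂(freqMeasure d)) 2 (freqMeasure d) ≤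
      (K : ℝ≥0∞) * ENNReal.ofReal C * eLpNorm f 2 (freqMeasure d) *
        eLpNorm g 2 (freqMeasure d) := by
  classical
  obtain ⟨f', hf'sm, hff'⟩ := hf.aestronglyMeasurable
  obtain ⟨g', hg'sm, hgg'⟩ := hg.aestronglyMeasurable
  have hfm : Measurable f' := hf'sm.measurable
  have hgm : Measurable g' := hg'sm.measurable
  -- pointwise replacement of f, g by measurable representatives
  have hpoint : ∀ p, (∫ q, G (p, q) * f (p - q) * g q ∂(freqMeasure d)) =
      ∫ q, G (p, q) * f' (p - q) * g' q ∂(freqMeasure d) := by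
    intro p
    apply integral_congr_ae
    have h1 : (fun q => f (p - q)) =ᵐ[freqMeasure d] fun q => f' (p - q) :=
      (Measure.measurePreserving_sub_left (freqMeasure d) p).quasiMeasurePreserving.ae_eq_comp
        hff'
    filter_upwards [h1, hgg'] with q e1 e2
    rw [e1, e2]
  have hfun : (fun p => ∫ q, G (p, q) * f (p - q) * g q ∂(freqMeasure d)) =
      fun p => ∫ q, G (p, q) * f' (p - q) * g' q ∂(freqMeasure d) := funext hpoint
  have hfe : eLpNorm f 2 (freqMeasure d) = eLpNorm f' 2 (freqMeasure d) :=
    eLpNorm_congr_ae hff'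
  have hge : eLpNorm g 2 (freqMeasure d) = eLpNorm g' 2 (freqMeasure d) :=
    eLpNorm_congr_ae hgg'
  rw [hfun, hfe, hge]
  have key := core d K C hC G Gj hGjmeas hdecomp hschur f' g' hfm hgm
  have hsm : StronglyMeasurable
      (fun p => ∫ q, G (p, q) * f' (p - q) * g' q ∂(freqMeasure d)) := by
    have hint : Measurable (fun z : Freq d × Freq d => G z * f' (z.1 - z.2) * g' z.2) :=
      (hGmeas.mul (hfm.comp measurable_sub)).mul (hgm.comp measurable_snd)
    exact hint.stronglyMeasurable.integral_prod_right'
  have hfin : (K : ℝ≥0∞) * ENNReal.ofReal C * eLpNorm f' 2 (freqMeasure d) *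
      eLpNorm g' 2 (freqMeasure d) < ⊤ := by
    apply ENNReal.mul_lt_top
    apply ENNReal.mul_lt_top
    apply ENNReal.mul_lt_top
    · exact ENNReal.natCast_lt_top K
    · exact ENNReal.ofReal_lt_top
    · rw [← hfe]; exact hf.2
    · rw [← hge]; exact hg.2
  exact ⟨⟨hsm.aestronglyMeasurable.congr (by rfl), lt_of_le_of_lt key hfin⟩, key⟩


end
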